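/- For a complex number E with |E| < 1, a k-th root F of E, ζ_j = exp(2πij/k), a_j = 1 - ζ_j·F, and nonnegative integers n, r with 0 ≤ r ≤ k-1, one has ∑_{q=0}^∞ C(n + r + k·q, n) · E^q · q = k^{-2} · F^{-r} · ( -r · ∑_{j=0}^{k-1} ζ_j^{-r} · a_j^{-(n+1)} + F·(n+1) · ∑_{j=0}^{k-1} ζ_j^{-r+1} · a_j^{-(n+2)} ). -/

import Mathlib

open Complex Finset

lemma aux_summable1 {x : ℂ} (hx : ‖x‖ < 1) (n : ℕ) :
    Summable (fun m : ℕ ↦ ((m + n).choose n : ℂ) * x ^ m) :=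
  summable_choose_mul_geometric_of_norm_lt_one n (by simpa using hx)

lemma aux_tsum1 {x : ℂ} (hx : ‖x‖ < 1) (n : ℕ) :
    ∑' m : ℕ, ((m + n).choose n : ℂ) * x ^ m = (1 - x) ^ (-((n : ℤ) + 1)) := by
  rw [tsum_choose_mul_geometric_of_norm_lt_one n (by simpa using hx),
    show -((n:ℤ)+1) = -(((n+1 : ℕ) : ℤ)) by push_cast; ring, zpow_neg, zpow_natCast, one_div]

lemma aux_key (n m : ℕ) :
    (m : ℂ) * ((m + n).choose n : ℂ) = ((n:ℂ)+1) * ((m + n).choose (n+1) : ℂ) := by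
  have h := Nat.choose_succ_right_eq (m+n) n
  rw [Nat.add_sub_cancel] at h
  have := congrArg (Nat.cast : ℕ → ℂ) h
  push_cast at this
  linear_combination -this

lemma aux_summable1' {x : ℂ} (hx : ‖x‖ < 1) (n : ℕ) :
    Summable (fun m : ℕ ↦ ((m + n).choose (n+1) : ℂ) * x ^ m) := by
  rw [← summable_nat_add_iff 1]
  have : (fun m : ℕ ↦ ((m + 1 + n).choose (n+1) : ℂ) * x ^ (m+1))
      = fun m ↦ x * (((m + (n+1)).choose (n+1) : ℂ) * x ^ m) := by
    funext m; rw [show m+1+n = m+(n+1) by ring]; ring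
  rw [this]
  exact (aux_summable1 hx (n+1)).mul_left x

lemma aux_summable2 {x : ℂ} (hx : ‖x‖ < 1) (n : ℕ) :
    Summable (fun m : ℕ ↦ (m : ℂ) * ((m + n).choose n : ℂ) * x ^ m) := by
  refine ((aux_summable1' hx n).mul_left ((n:ℂ)+1)).congr fun m ↦ ?_
  rw [← mul_assoc, ← aux_key]

lemma aux_tsum2 {x : ℂ} (hx : ‖x‖ < 1) (n : ℕ) :
    ∑' m : ℕ, (m : ℂ) * ((m + n).choose n : ℂ) * x ^ m
      = ((n:ℂ)+1) * x * (1 - x) ^ (-((n : ℤ) + 2)) := by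
  have h1 : ∑' m : ℕ, (m : ℂ) * ((m + n).choose n : ℂ) * x ^ m
      = ((n:ℂ)+1) * ∑' m : ℕ, ((m + n).choose (n+1) : ℂ) * x ^ m := by
    rw [← tsum_mul_left]
    exact tsum_congr fun m ↦ by rw [← mul_assoc, ← aux_key]
  rw [h1, Summable.tsum_eq_zero_add (aux_summable1' hx n)]
  have h2 : ∑' m : ℕ, ((m + 1 + n).choose (n+1) : ℂ) * x ^ (m+1)
      = x * ∑' m : ℕ, ((m + (n+1)).choose (n+1) : ℂ) * x ^ m := by
    rw [← tsum_mul_left]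
    exact tsum_congr fun m ↦ by rw [show m+1+n = m+(n+1) by ring]; ring
  rw [h2, aux_tsum1 hx (n+1), Nat.choose_eq_zero_of_lt (by omega)]
  push_cast
  rw [show -(((n:ℤ))+1+1) = -((n:ℤ)+2) by ring]
  ring

lemma aux_filter (k : ℕ) (hk : 1 ≤ k) (ζ : ℕ → ℂ)
    (hζ : ∀ j, ζ j = Complex.exp (2 * Real.pi * Complex.I * j / k)) (d : ℤ) :
    ∑ j ∈ Finset.range k, ζ j ^ d = if (k:ℤ) ∣ d then (k:ℂ) else 0 := by
  set ω : ℂ := Complex.exp (2 * Real.pi * Complex.I / k) with hω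
  have hprim : IsPrimitiveRoot ω k := Complex.isPrimitiveRoot_exp k (by omega)
  have hζj : ∀ j : ℕ, ζ j = ω ^ j := by
    intro j
    rw [hζ, hω, ← Complex.exp_nat_mul]
    ring_nf
  have hωne : ω ≠ 0 := Complex.exp_ne_zero _
  have h1 : ∀ j : ℕ, ζ j ^ d = (ω ^ d) ^ j := by
    intro j
    rw [hζj, ← zpow_natCast ω j, ← zpow_mul, mul_comm, zpow_mul, zpow_natCast]
  simp_rw [h1]
  by_cases hd : (k:ℤ) ∣ d
  · rw [if_pos hd, (hprim.zpow_eq_one_iff_dvd d).mpr hd]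
    simp
  · rw [if_neg hd]
    have hne : ω ^ d ≠ 1 := fun h => hd ((hprim.zpow_eq_one_iff_dvd d).mp h)
    rw [geom_sum_eq hne]
    have : (ω ^ d) ^ k = 1 := by
      rw [← zpow_natCast, ← zpow_mul, mul_comm, zpow_mul, zpow_natCast, hprim.pow_eq_one, one_zpow]
    rw [this, sub_self, zero_div]

/-- `∑_q C(n+r+kq, n) E^q q
  = k⁻² F^{-r} ( -r ∑_j ζ_j^{-r} a_j^{-(n+1)} + F(n+1) ∑_j ζ_j^{-r+1} a_j^{-(n+2)} )`. -/
theorem statement1 (k : ℕ) (hk : 1 ≤ k) (E F : ℂ) (hE : ‖E‖ < 1)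
    (hFk : F ^ k = E) (hF : ‖F‖ < 1) (hF0 : F ≠ 0)
    (ζ a : ℕ → ℂ)
    (hζ : ∀ j, ζ j = Complex.exp (2 * Real.pi * Complex.I * j / k))
    (ha : ∀ j, a j = 1 - ζ j * F)
    (n r : ℕ) (hr : r ≤ k - 1) :
    ∑' q : ℕ, ((n + r + k * q).choose n : ℂ) * E ^ q * q
      = ((k : ℂ) ^ 2)⁻¹ * F ^ (-(r : ℤ)) *
        (-(r : ℂ) * ∑ j ∈ Finset.range k, ζ j ^ (-(r : ℤ)) * a j ^ (-((n : ℤ) + 1))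
          + F * ((n : ℂ) + 1) *
            ∑ j ∈ Finset.range k, ζ j ^ (-(r : ℤ) + 1) * a j ^ (-((n : ℤ) + 2))) := by
  have hk0 : (k:ℂ) ≠ 0 := Nat.cast_ne_zero.mpr (by omega)
  -- basic facts about ζ and a
  have hζ0 : ∀ j, ζ j ≠ 0 := fun j ↦ by rw [hζ]; exact Complex.exp_ne_zero _
  have hζabs : ∀ j, ‖ζ j‖ = 1 := by
    intro j
    rw [hζ, Complex.norm_exp,
      show (2 * Real.pi * Complex.I * j / k) = Complex.I * ((2*Real.pi*j/k : ℝ) : ℂ) by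
        push_cast; ring]
    simp
  have hxabs : ∀ j, ‖ζ j * F‖ < 1 := fun j ↦ by
    rw [norm_mul, hζabs, one_mul]; exact hF
  have haeq : ∀ j, a j = 1 - ζ j * F := ha
  have ha0 : ∀ j, a j ≠ 0 := by
    intro j h
    rw [haeq, sub_eq_zero] at h
    have := hxabs j
    rw [← h] at this
    simp at this
  -- the per-j summand
  set f : ℕ → ℕ → ℂ := fun j m ↦
    (((m:ℂ) - r) * ((m + n).choose n : ℂ) * F ^ m) * ζ j ^ ((m:ℤ) - (r:ℤ)) with hf
  have hfalt : ∀ j m, f j m = ζ j ^ (-(r:ℤ)) *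
      ((m:ℂ) * ((m + n).choose n : ℂ) * (ζ j * F) ^ m
        - (r:ℂ) * (((m + n).choose n : ℂ) * (ζ j * F) ^ m)) := by
    intro j m
    rw [hf]
    simp only [mul_pow]
    rw [show (m:ℤ) - (r:ℤ) = -(r:ℤ) + (m:ℕ) by push_cast; ring,
      zpow_add₀ (hζ0 j), zpow_natCast]
    ring
  have hfs : ∀ j, Summable (f j) := by
    intro j
    refine (((aux_summable2 (hxabs j) n).sub
      ((aux_summable1 (hxabs j) n).mul_left (r:ℂ))).mul_left (ζ j ^ (-(r:ℤ)))).congr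
      fun m ↦ (hfalt j m).symm
  -- value of the per-j tsum
  have hft : ∀ j, ∑' m : ℕ, f j m
      = -(r:ℂ) * (ζ j ^ (-(r : ℤ)) * a j ^ (-((n : ℤ) + 1)))
        + F * ((n : ℂ) + 1) * (ζ j ^ (-(r : ℤ) + 1) * a j ^ (-((n : ℤ) + 2))) := by
    intro j
    calc ∑' m : ℕ, f j m
        = ∑' m : ℕ, ζ j ^ (-(r:ℤ)) *
            ((m:ℂ) * ((m + n).choose n : ℂ) * (ζ j * F) ^ m
              - (r:ℂ) * (((m + n).choose n : ℂ) * (ζ j * F) ^ m)) := tsum_congr (hfalt j)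
      _ = ζ j ^ (-(r:ℤ)) * ∑' m : ℕ,
            ((m:ℂ) * ((m + n).choose n : ℂ) * (ζ j * F) ^ m
              - (r:ℂ) * (((m + n).choose n : ℂ) * (ζ j * F) ^ m)) := tsum_mul_left
      _ = ζ j ^ (-(r:ℤ)) * ((∑' m : ℕ, (m:ℂ) * ((m + n).choose n : ℂ) * (ζ j * F) ^ m)
          - ∑' m : ℕ, (r:ℂ) * (((m + n).choose n : ℂ) * (ζ j * F) ^ m)) := by
          rw [Summable.tsum_sub (aux_summable2 (hxabs j) n)
            ((aux_summable1 (hxabs j) n).mul_left (r:ℂ))]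
      _ = ζ j ^ (-(r:ℤ)) * ((∑' m : ℕ, (m:ℂ) * ((m + n).choose n : ℂ) * (ζ j * F) ^ m)
          - (r:ℂ) * ∑' m : ℕ, ((m + n).choose n : ℂ) * (ζ j * F) ^ m) := by
          rw [tsum_mul_left]
      _ = ζ j ^ (-(r:ℤ)) * ((((n:ℂ)+1) * (ζ j * F) * a j ^ (-((n:ℤ)+2)))
            - (r:ℂ) * a j ^ (-((n:ℤ)+1))) := by
          rw [aux_tsum2 (hxabs j) n, aux_tsum1 (hxabs j) n, ← haeq]
      _ = _ := by
          rw [zpow_add₀ (hζ0 j), zpow_one]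
          ring
  -- swap the finite sum and the tsum
  have hswap : ∑ j ∈ Finset.range k, ∑' m : ℕ, f j m = ∑' m : ℕ, ∑ j ∈ Finset.range k, f j m :=
    (Summable.tsum_finsetSum fun j _ ↦ hfs j).symm
  -- inner finite sum via the filter
  set g : ℕ → ℂ := fun m ↦
    (((m:ℂ) - r) * ((m + n).choose n : ℂ) * F ^ m) *
      (if (k:ℤ) ∣ ((m:ℤ) - (r:ℤ)) then (k:ℂ) else 0) with hg
  have hinner : ∀ m, ∑ j ∈ Finset.range k, f j m = g m := by
    intro m
    rw [hg, hf, ← Finset.mul_sum, aux_filter k hk ζ hζ ((m:ℤ) - (r:ℤ))]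
  -- reindex the tsum over the support
  have hrlt : r < k := by omega
  have hinj : Function.Injective (fun q : ℕ ↦ r + k * q) := by
    intro p q h
    simp only at h
    exact Nat.eq_of_mul_eq_mul_left (Nat.pos_of_ne_zero (by omega)) (Nat.add_left_cancel h)
  have hsupp : Function.support g ⊆ Set.range (fun q : ℕ ↦ r + k * q) := by
    intro m hm
    rw [Function.mem_support] at hm
    by_cases hd : (k:ℤ) ∣ ((m:ℤ) - (r:ℤ))
    · obtain ⟨t, ht⟩ := hd
      rcases le_or_gt r m with hmr | hmr
      · have ht0 : 0 ≤ t := by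
          rcases le_or_gt 0 t with h | h
          · exact h
          · exfalso
            have h1 : (k:ℤ) * t < 0 :=
              mul_neg_of_pos_of_neg (by exact_mod_cast Nat.pos_of_ne_zero (by omega)) h
            have h2 : (0:ℤ) ≤ (m:ℤ) - (r:ℤ) := by
              have : (r:ℤ) ≤ (m:ℤ) := by exact_mod_cast hmr
              omega
            omega
      
        refine ⟨t.toNat, ?_⟩
        show r + k * t.toNat = m
        have h3 : (m:ℤ) = (r:ℤ) + (k:ℤ) * t.toNat := by
          rw [Int.toNat_of_nonneg ht0]
          linarith
        exact_mod_cast h3.symm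
      · exfalso
        have h1 : (k:ℤ) ∣ ((r:ℤ) - (m:ℤ)) := ⟨-t, by linarith⟩
        have h2 : (k:ℤ) ≤ (r:ℤ) - (m:ℤ) := Int.le_of_dvd (by
          have : (m:ℤ) < (r:ℤ) := by exact_mod_cast hmr
          omega) h1
        have h3 : (r:ℤ) < (k:ℤ) := by exact_mod_cast hrlt
        omega
    · exfalso
      apply hm
      simp only [hg, if_neg hd, mul_zero]
  have hreindex : ∑' q : ℕ, g (r + k * q) = ∑' m : ℕ, g m := hinj.tsum_eq hsupp
  -- evaluate g on the arithmetic progression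
  have hgval : ∀ q : ℕ, g (r + k * q)
      = ((k:ℂ)^2 * F ^ (r:ℕ)) * (((n + r + k * q).choose n : ℂ) * E ^ q * q) := by
    intro q
    have hd : (k:ℤ) ∣ (((r + k * q : ℕ):ℤ) - (r:ℤ)) := ⟨q, by push_cast; ring⟩
    simp only [hg, if_pos hd]
    have h1 : (((r + k * q : ℕ):ℂ) - (r:ℂ)) = (k:ℂ) * q := by push_cast; ring
    have h2 : F ^ (r + k * q) = F ^ (r:ℕ) * E ^ q := by
      rw [pow_add, pow_mul, hFk]
    have h3 : (r + k * q) + n = n + r + k * q := by ring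
    rw [h1, h2, h3]
    ring
  -- put everything together
  have hmain : ∑ j ∈ Finset.range k, ∑' m : ℕ, f j m
      = ((k:ℂ)^2 * F ^ (r:ℕ)) * ∑' q : ℕ, ((n + r + k * q).choose n : ℂ) * E ^ q * q := by
    rw [hswap]
    rw [tsum_congr hinner, ← hreindex, tsum_congr hgval, tsum_mul_left]
  have hbracket : (-(r : ℂ) * ∑ j ∈ Finset.range k, ζ j ^ (-(r : ℤ)) * a j ^ (-((n : ℤ) + 1))
          + F * ((n : ℂ) + 1) *
            ∑ j ∈ Finset.range k, ζ j ^ (-(r : ℤ) + 1) * a j ^ (-((n : ℤ) + 2)))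
      = ∑ j ∈ Finset.range k, ∑' m : ℕ, f j m := by
    rw [Finset.mul_sum, Finset.mul_sum, ← Finset.sum_add_distrib]
    exact Finset.sum_congr rfl fun j _ ↦ (hft j).symm
  rw [hbracket, hmain]
  rw [show F ^ (r:ℕ) = F ^ ((r:ℕ):ℤ) from (zpow_natCast F r).symm]
  rw [show ((k:ℂ)^2)⁻¹ * F ^ (-(r:ℤ)) * ((k:ℂ)^2 * F ^ ((r:ℕ):ℤ) *
      ∑' q : ℕ, ((n + r + k * q).choose n : ℂ) * E ^ q * q)
    = (((k:ℂ)^2)⁻¹ * (k:ℂ)^2) * (F ^ (-(r:ℤ)) * F ^ ((r:ℕ):ℤ)) *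
      ∑' q : ℕ, ((n + r + k * q).choose n : ℂ) * E ^ q * q by ring]
  rw [inv_mul_cancel₀ (pow_ne_zero 2 hk0), ← zpow_add₀ hF0]
  simp
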